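/- The tetrahedron index satisfies the 'triality' symmetry I_Δ(m,e)(q) = (−q^{1/2})^{−e} I_Δ(e, −e−m)(q) as an identity of formal Laurent series in q^{1/2}. -/

import Mathlib

open HahnSeries

/-- `(q;q)_n = ∏_{i=1}^n (1−q^i)` as a power series in the variable `X = q^{1/2}`
(so `q = X²`). -/
noncomputable def qPochhammer' (n : ℕ) : PowerSeries ℤ :=
  ∏ i ∈ Finset.range n, (1 - (PowerSeries.X : PowerSeries ℤ) ^ (2 * (i + 1)))

/-- `1/(q;q)_n` as a formal Laurent series in `q^{1/2}`, with the convention that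
it is `0` for `n < 0`.  Since `(q;q)_n` has constant coefficient `1`, it is
invertible in `ℤ[[q]]`. -/
noncomputable def qPochhammerInv (n : ℤ) : LaurentSeries ℤ :=
  if n < 0 then 0
  else HahnSeries.ofPowerSeries ℤ ℤ (PowerSeries.invOfUnit (qPochhammer' n.toNat) 1)

/-- The `n`-th summand `(−1)^n q^{n(n+1)/2 − (n+e/2)m} / ((q;q)_n (q;q)_{n+e})`
of the tetrahedron index `I_Δ(m,e)(q)`, as a formal Laurent series in `q^{1/2}`:
the exponent of `q^{1/2}` is `n(n+1) − (2n+e)m`. -/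
noncomputable def tetraTerm (m e n : ℤ) : LaurentSeries ℤ :=
  HahnSeries.single (n * (n + 1) - (2 * n + e) * m) ((((-1 : ℤˣ) ^ n : ℤˣ) : ℤ)) *
    qPochhammerInv n * qPochhammerInv (n + e)

abbrev LS := LaurentSeries ℤ

/-! ## Basic facts about `qPochhammerInv` -/

lemma pochInv_neg {n : ℤ} (h : n < 0) : qPochhammerInv n = 0 := if_pos h

lemma qPoch_const (N : ℕ) : PowerSeries.constantCoeff (qPochhammer' N) = 1 := by
  unfold qPochhammer'
  rw [map_prod]
  apply Finset.prod_eq_one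
  intro i _
  rw [map_sub, map_one, map_pow, PowerSeries.constantCoeff_X, zero_pow (by omega), sub_zero]

lemma poch_mul_inv (N : ℕ) :
    (HahnSeries.ofPowerSeries ℤ ℤ (qPochhammer' N)) * qPochhammerInv (N : ℤ) = 1 := by
  rw [qPochhammerInv, if_neg (by omega), Int.toNat_natCast, ← map_mul,
    PowerSeries.mul_invOfUnit _ _ (by rw [qPoch_const]; rfl), map_one]

lemma pochInv_zero : qPochhammerInv 0 = 1 := by
  have := poch_mul_inv 0
  simpa [qPochhammer'] using this

/-- nonnegatively supported -/
def NN (F : LS) : Prop := ∀ c : ℤ, c < 0 → F.coeff c = 0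

lemma NN_coe (p : PowerSeries ℤ) : NN (HahnSeries.ofPowerSeries ℤ ℤ p) := by
  intro c hc
  rw [HahnSeries.ofPowerSeries_apply]
  apply HahnSeries.embDomain_notin_range
  rintro ⟨n, rfl⟩
  simp at hc
  omega

lemma NN_one : NN (1 : LS) := by
  intro c hc
  rw [HahnSeries.coeff_one, if_neg (by omega)]

lemma NN_inv (n : ℤ) : NN (qPochhammerInv n) := by
  unfold qPochhammerInv
  split
  · intro c _; simp
  · exact NN_coe _

lemma NN_mul {F G : LS} (hF : NN F) (hG : NN G) : NN (F * G) := by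
  intro c hc
  by_contra h
  have hmem : c ∈ (F * G).support := h
  obtain ⟨i, hi, j, hj, hij⟩ := HahnSeries.support_mul_subset hmem
  have hij' : i + j = c := hij
  simp only [HahnSeries.mem_support] at hi hj
  rcases lt_or_ge i 0 with h1 | h1
  · exact hi (hF i h1)
  · rcases lt_or_ge j 0 with h2 | h2
    · exact hj (hG j h2)
    · omega

lemma single_mul_coeff' (a : ℤ) (r : ℤ) (x : LS) (c : ℤ) :
    (HahnSeries.single a r * x).coeff c = r * x.coeff (c - a) := by
  have : c = (c - a) + a := by ring
  rw [this, HahnSeries.coeff_single_mul_add]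
  ring_nf

/-- coefficient of `single E s * Y` vanishes below `E` for `Y` nonneg. supported -/
lemma VAN {E c : ℤ} (s : ℤ) {Y : LS} (hY : NN Y) (h : c < E) :
    (HahnSeries.single E s * Y).coeff c = 0 := by
  rw [single_mul_coeff', hY _ (by omega), mul_zero]

/-- low-coefficient vanishing of products `F * H` with `F` nonneg supported,
`H` vanishing at all coefficients `≤ c` -/
lemma LOWMUL {F H : LS} (hF : NN F) {c : ℤ} (hH : ∀ c' ≤ c, H.coeff c' = 0) :
    (F * H).coeff c = 0 := by
  by_contra h
  obtain ⟨i, hi, j, hj, hij⟩ :=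
    HahnSeries.support_mul_subset (HahnSeries.mem_support _ _ |>.mpr h)
  have hij' : i + j = c := hij
  simp only [HahnSeries.mem_support] at hi hj
  rcases lt_or_ge i 0 with h1 | h1
  · exact hi (hF i h1)
  · exact hj (hH j (by omega))

lemma inv_split (N : ℤ) :
    qPochhammerInv (N - 1) = (1 - HahnSeries.single (2 * N) 1) * qPochhammerInv N := by
  rcases lt_trichotomy N 0 with h | h | h
  · rw [pochInv_neg h, pochInv_neg (by omega), mul_zero]
  · subst h
    rw [pochInv_neg (by omega), pochInv_zero, mul_one]
    have h0 : (2 : ℤ) * 0 = 0 := by ring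
    rw [h0, HahnSeries.single_zero_one]
    ring
  · obtain ⟨K, rfl⟩ : ∃ K : ℕ, N = (K : ℤ) + 1 := ⟨(N - 1).toNat, by omega⟩
    have hsucc : (HahnSeries.ofPowerSeries ℤ ℤ (qPochhammer' (K + 1)))
        = (HahnSeries.ofPowerSeries ℤ ℤ (qPochhammer' K)) *
          (1 - HahnSeries.single (2 * ((K : ℤ) + 1)) 1) := by
      unfold qPochhammer'
      rw [Finset.prod_range_succ, map_mul]
      congr 1
      rw [map_sub, map_one, HahnSeries.ofPowerSeries_X_pow]
      congr 2
    have h1 : (HahnSeries.ofPowerSeries ℤ ℤ (qPochhammer' K)) *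
        ((1 - HahnSeries.single (2 * ((K : ℤ) + 1)) 1) * qPochhammerInv ((K : ℤ) + 1)) = 1 := by
      rw [← mul_assoc, ← hsucc]
      have := poch_mul_inv (K + 1)
      push_cast at this ⊢
      convert this using 3
    have h2 : (HahnSeries.ofPowerSeries ℤ ℤ (qPochhammer' K)) *
        qPochhammerInv ((K : ℤ) + 1 - 1) = 1 := by
      have := poch_mul_inv K
      simpa using this
    calc qPochhammerInv ((K:ℤ) + 1 - 1)
        = qPochhammerInv ((K:ℤ) + 1 - 1) * ((HahnSeries.ofPowerSeries ℤ ℤ (qPochhammer' K)) *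
            ((1 - HahnSeries.single (2 * ((K : ℤ) + 1)) 1) * qPochhammerInv ((K : ℤ) + 1))) := by
          rw [h1, mul_one]
      _ = ((HahnSeries.ofPowerSeries ℤ ℤ (qPochhammer' K)) * qPochhammerInv ((K:ℤ) + 1 - 1)) *
            ((1 - HahnSeries.single (2 * ((K : ℤ) + 1)) 1) * qPochhammerInv ((K : ℤ) + 1)) := by
          ring
      _ = (1 - HahnSeries.single (2 * ((K : ℤ) + 1)) 1) * qPochhammerInv ((K : ℤ) + 1) := by
          rw [h2, one_mul]

/-! ## sign helper -/

noncomputable def sgn (n : ℤ) : ℤ := (((-1 : ℤˣ) ^ n : ℤˣ) : ℤ)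

lemma sgn_add (x y : ℤ) : sgn (x + y) = sgn x * sgn y := by
  unfold sgn
  rw [zpow_add, Units.val_mul]

lemma sgn_zero : sgn 0 = 1 := by unfold sgn; rw [zpow_zero]; rfl

lemma sgn_one : sgn 1 = -1 := by unfold sgn; rw [zpow_one]; rfl

lemma sgn_sq (x : ℤ) : sgn x * sgn x = 1 := by
  unfold sgn
  rw [← Units.val_mul, ← zpow_add]
  have : x + x = 2 * x := by ring
  rw [this, zpow_mul]
  have h2 : ((-1 : ℤˣ) ^ (2:ℤ)) = 1 := by
    rw [zpow_two]; simp
  rw [h2, one_zpow]; rfl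

lemma sgn_succ (x : ℤ) : sgn (x + 1) = -sgn x := by
  rw [sgn_add, sgn_one]; ring

lemma sgn_neg' (x : ℤ) : sgn (-x) = sgn x := by
  have h : sgn (-x) * (sgn x * sgn x) = sgn (-x) := by rw [sgn_sq, mul_one]
  have h2 : sgn (-x) * sgn x = 1 := by rw [← sgn_add]; simp [sgn_zero]
  calc sgn (-x) = sgn (-x) * (sgn x * sgn x) := h.symm
    _ = (sgn (-x) * sgn x) * sgn x := by ring
    _ = sgn x := by rw [h2, one_mul]

lemma single_neg' (a : ℤ) (s : ℤ) :
    HahnSeries.single a (-s) = -(HahnSeries.single a s : LS) := by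
  ext c
  rw [HahnSeries.coeff_neg, HahnSeries.coeff_single, HahnSeries.coeff_single]
  split <;> simp

/-- coefficient extraction as additive hom -/
noncomputable def coeffHom (c : ℤ) : LS →+ ℤ where
  toFun F := F.coeff c
  map_zero' := HahnSeries.coeff_zero
  map_add' _ _ := HahnSeries.coeff_add

lemma coeff_sum (s : Finset ℤ) (f : ℤ → LS) (c : ℤ) :
    (∑ k ∈ s, f k).coeff c = ∑ k ∈ s, (f k).coeff c :=
  map_sum (coeffHom c) f s

/-! ## arithmetic bounds -/

lemma Ebound {a c n : ℤ} (h : 2*|a| + |c| + 1 < n) : c < n*(n+1) + 2*a*n := by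
  have ha := neg_abs_le a
  have hc := le_abs_self c
  have h0 := abs_nonneg a
  have h0' := abs_nonneg c
  have h2 : |c| + 3 ≤ (n+1) + 2*a := by linarith
  have h3 : (1:ℤ) ≤ n := by linarith
  have h4 : 1 * (|c| + 3) ≤ n * ((n+1)+2*a) := by
    apply mul_le_mul h3 h2 (by linarith) (by linarith)
  nlinarith

lemma Elow {a n : ℤ} (hn : 0 ≤ n) : -(a*a) ≤ n*(n+1) + 2*a*n := by
  nlinarith [sq_nonneg (n+a)]

/-! ## the index summands -/

noncomputable def gtrm (a k : ℤ) : LS :=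
  HahnSeries.single (k * (k + 1) + 2 * a * k) (sgn k) * qPochhammerInv k

noncomputable def trm (a b n : ℤ) : LS :=
  HahnSeries.single (n * (n + 1) + 2 * a * n) (sgn n) *
    (qPochhammerInv n * qPochhammerInv (n + b))

lemma trm_eq_gtrm (a b n : ℤ) : trm a b n = gtrm a n * qPochhammerInv (n + b) := by
  unfold trm gtrm
  exact (mul_assoc _ _ _).symm

/-- merging two `single`-prefixed products -/
lemma sm_mul_sm (s t u v : ℤ) (x y : LS) :
    (HahnSeries.single s u * x) * (HahnSeries.single t v * y)
      = HahnSeries.single (s + t) (u * v) * (x * y) := by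
  rw [mul_mul_mul_comm, HahnSeries.single_mul_single]

noncomputable def Isum (a b c : ℤ) : ℤ := ∑' n : ℤ, (trm a b n).coeff c
noncomputable def Gsum (a c : ℤ) : ℤ := ∑' k : ℤ, (gtrm a k).coeff c

/-! ## vanishing lemmas -/

lemma trm_neg {a b n : ℤ} (h : n < 0) : trm a b n = 0 := by
  unfold trm
  rw [pochInv_neg h, zero_mul, mul_zero]

lemma gtrm_neg {a k : ℤ} (h : k < 0) : gtrm a k = 0 := by
  unfold gtrm
  rw [pochInv_neg h, mul_zero]

lemma gtrm_van {a k c : ℤ} (h : c < k*(k+1) + 2*a*k) : (gtrm a k).coeff c = 0 := by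
  unfold gtrm
  exact VAN _ (NN_inv k) h

lemma trm_van {a b n c : ℤ} (h : c < n*(n+1) + 2*a*n) : (trm a b n).coeff c = 0 := by
  unfold trm
  exact VAN _ (NN_mul (NN_inv n) (NN_inv (n+b))) h

lemma trm_out {a b c : ℤ} {n : ℤ} (hn : n ∉ Finset.Icc (0:ℤ) (2*|a| + |c| + 1)) :
    (trm a b n).coeff c = 0 := by
  rw [Finset.mem_Icc] at hn
  rcases lt_or_ge n 0 with h | h
  · rw [trm_neg h, HahnSeries.coeff_zero]
  · exact trm_van (Ebound (by omega))

lemma gtrm_out {a c : ℤ} {k : ℤ} (hk : k ∉ Finset.Icc (0:ℤ) (2*|a| + |c| + 1)) :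
    (gtrm a k).coeff c = 0 := by
  rw [Finset.mem_Icc] at hk
  rcases lt_or_ge k 0 with h | h
  · rw [gtrm_neg h, HahnSeries.coeff_zero]
  · exact gtrm_van (Ebound (by omega))

lemma Isum_eq_sum {a b c B : ℤ} (hB : 2*|a| + |c| + 1 ≤ B) :
    Isum a b c = ∑ n ∈ Finset.Icc (0:ℤ) B, (trm a b n).coeff c := by
  apply tsum_eq_sum
  intro n hn
  apply trm_out
  rw [Finset.mem_Icc] at hn ⊢
  omega

lemma Gsum_eq_sum {a c B : ℤ} (hB : 2*|a| + |c| + 1 ≤ B) :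
    Gsum a c = ∑ k ∈ Finset.Icc (0:ℤ) B, (gtrm a k).coeff c := by
  apply tsum_eq_sum
  intro k hk
  apply gtrm_out
  rw [Finset.mem_Icc] at hk ⊢
  omega

lemma Isum_low {a b c : ℤ} (h : c < -(a*a)) : Isum a b c = 0 := by
  unfold Isum
  rw [tsum_eq_sum (s := ∅)]
  · simp
  intro n _
  rcases lt_or_ge n 0 with hn | hn
  · rw [trm_neg hn, HahnSeries.coeff_zero]
  · exact trm_van (by have := Elow (a := a) hn; omega)

lemma Gsum_low {a c : ℤ} (h : c < -(a*a)) : Gsum a c = 0 := by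
  unfold Gsum
  rw [tsum_eq_sum (s := ∅)]
  · simp
  intro k _
  rcases lt_or_ge k 0 with hk | hk
  · rw [gtrm_neg hk, HahnSeries.coeff_zero]
  · exact gtrm_van (by have := Elow (a := a) hk; omega)

/-- pulling a sign out of a `tsum` over `ℤ` -/
lemma tsum_sgn_mul (x : ℤ) (f : ℤ → ℤ) : ∑' n : ℤ, sgn x * f n = sgn x * ∑' n, f n := by
  rcases Int.units_eq_one_or ((-1 : ℤˣ) ^ x) with h | h <;> unfold sgn <;> rw [h]
  · simp
  · push_cast
    simp only [neg_one_mul]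
    rw [tsum_neg]

/-! ## the Euler series `G_a` and its recursion -/

noncomputable def jtrm (a k : ℤ) : LS :=
  HahnSeries.single (k * (k + 1) + 2 * a * k) (sgn k) * qPochhammerInv (k - 1)

lemma J1 (a k : ℤ) : jtrm a k = gtrm a k - gtrm (a+1) k := by
  unfold jtrm gtrm
  rw [inv_split k, sub_mul, one_mul, mul_sub, ← mul_assoc,
    HahnSeries.single_mul_single, mul_one]
  have h : k * (k + 1) + 2 * a * k + 2 * k = k * (k + 1) + 2 * (a + 1) * k := by ring
  rw [h]

lemma J2c (a k c : ℤ) :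
    (jtrm a (k+1)).coeff c = -((gtrm (a+1) k).coeff (c - 2*(a+1))) := by
  unfold jtrm gtrm
  rw [single_mul_coeff', single_mul_coeff']
  have h1 : k + 1 - 1 = k := by ring
  have h2 : c - ((k+1) * ((k+1) + 1) + 2 * a * (k+1))
      = c - 2*(a+1) - (k * (k + 1) + 2 * (a + 1) * k) := by ring
  rw [h1, h2, sgn_succ]
  ring

lemma GA (a c : ℤ) : Gsum a c = Gsum (a+1) c - Gsum (a+1) (c - 2*(a+1)) := by
  have hsum1 : Summable (fun k : ℤ => (gtrm a k).coeff c) :=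
    summable_of_ne_finset_zero (fun k hk => gtrm_out hk)
  have hsum2 : Summable (fun k : ℤ => (gtrm (a+1) k).coeff c) :=
    summable_of_ne_finset_zero (fun k hk => gtrm_out hk)
  have key : ∑' k : ℤ, (jtrm a k).coeff c = Gsum a c - Gsum (a+1) c := by
    calc ∑' k : ℤ, (jtrm a k).coeff c
        = ∑' k : ℤ, ((gtrm a k).coeff c - (gtrm (a+1) k).coeff c) := by
          congr 1
          funext k
          rw [J1, HahnSeries.coeff_sub]
      _ = Gsum a c - Gsum (a+1) c := Summable.tsum_sub hsum1 hsum2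
  have key2 : ∑' k : ℤ, (jtrm a k).coeff c = -Gsum (a+1) (c - 2*(a+1)) := by
    have e1 : ∑' k : ℤ, (jtrm a k).coeff c = ∑' k : ℤ, (jtrm a (k+1)).coeff c := by
      exact ((Equiv.addRight (1:ℤ)).tsum_eq (fun k => (jtrm a k).coeff c)).symm
    rw [e1]
    calc ∑' k : ℤ, (jtrm a (k+1)).coeff c
        = ∑' k : ℤ, -((gtrm (a+1) k).coeff (c - 2*(a+1))) := by
          congr 1
          funext k
          exact J2c a k c
      _ = -Gsum (a+1) (c - 2*(a+1)) := tsum_neg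
  linarith [key, key2]

lemma GC_aux : ∀ (j : ℕ) (c : ℤ), Gsum (-1 - (j:ℤ)) c = 0 := by
  intro j
  induction j with
  | zero =>
    intro c
    have hga := GA (-1) c
    have e : (-1:ℤ) + 1 = 0 := by ring
    rw [e] at hga
    have e' : c - 2*(0:ℤ) = c := by ring
    rw [e'] at hga
    have e0 : (-1 - ((0:ℕ):ℤ)) = -1 := by norm_num
    rw [e0, hga, sub_self]
  | succ j ih =>
    intro c
    have hga := GA (-1 - ((j:ℤ)+1)) c
    have e : (-1 - ((j:ℤ)+1)) + 1 = -1 - (j:ℤ) := by ring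
    rw [e] at hga
    have e2 : (-1 - ((j+1:ℕ):ℤ)) = -1 - ((j:ℤ)+1) := by push_cast; ring
    rw [e2, hga, ih, ih, sub_zero]

lemma GC {N : ℤ} (h : N < 0) (c : ℤ) : Gsum N c = 0 := by
  obtain ⟨j, hj⟩ : ∃ j : ℕ, N = -1 - (j:ℤ) := ⟨(-1 - N).toNat, by omega⟩
  rw [hj]; exact GC_aux j c

lemma Gsum_tail (M : ℕ) (c : ℤ) (hc : c ≤ 2*(M:ℤ)+1) : Gsum (M:ℤ) c = (1 : LS).coeff c := by
  unfold Gsum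
  rw [tsum_eq_sum (s := {0})]
  · rw [Finset.sum_singleton]
    congr 1
    unfold gtrm
    have h0 : (0:ℤ)*(0+1) + 2*(M:ℤ)*0 = 0 := by ring
    rw [h0, sgn_zero, HahnSeries.single_zero_one, pochInv_zero, one_mul]
  · intro k hk
    simp only [Finset.mem_singleton] at hk
    rcases lt_or_ge k 0 with h | h
    · rw [gtrm_neg h, HahnSeries.coeff_zero]
    · have hk1 : 1 ≤ k := by omega
      apply gtrm_van
      have hM : (0:ℤ) ≤ (M:ℤ) := Int.natCast_nonneg M
      nlinarith

/-! ## dividing by the polynomial `P_M = ∏_{i=1}^M (1 - X^{2i})` -/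

def pstep (i : ℕ) (f : ℤ → ℤ) : ℤ → ℤ := fun c => f c - f (c - 2*((i:ℤ)+1))

def pApply : ℕ → (ℤ → ℤ) → ℤ → ℤ
  | 0, f => f
  | (M+1), f => pstep M (pApply M f)

noncomputable def Pfam (M : ℕ) : LS :=
  ∏ i ∈ Finset.range M, (1 - HahnSeries.single (2*((i:ℤ)+1)) 1)

lemma Pfam_eq (M : ℕ) : Pfam M = HahnSeries.ofPowerSeries ℤ ℤ (qPochhammer' M) := by
  unfold Pfam qPochhammer'
  rw [map_prod]
  apply Finset.prod_congr rfl
  intro i _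
  have e : ((2*(i+1):ℕ):ℤ) = 2*((i:ℤ)+1) := by push_cast; ring
  rw [map_sub, HahnSeries.ofPowerSeries_X_pow, e,
    show (HahnSeries.ofPowerSeries ℤ ℤ) (1:PowerSeries ℤ) = 1 from map_one _]

lemma NN_Pfam (M : ℕ) : NN (Pfam M) := by rw [Pfam_eq]; exact NN_coe _

lemma Pfam_mul_inv (M : ℕ) : Pfam M * qPochhammerInv (M : ℤ) = 1 := by
  rw [Pfam_eq]; exact poch_mul_inv M

lemma Pfam_succ (M : ℕ) :
    Pfam (M+1) = Pfam M - HahnSeries.single (2*((M:ℤ)+1)) 1 * Pfam M := by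
  unfold Pfam
  rw [Finset.prod_range_succ]
  ring

lemma pstep_comm (i j : ℕ) (f : ℤ → ℤ) : pstep i (pstep j f) = pstep j (pstep i f) := by
  funext c
  unfold pstep
  ring_nf

lemma pApply_pstep (M j : ℕ) (f : ℤ → ℤ) :
    pApply M (pstep j f) = pstep j (pApply M f) := by
  induction M with
  | zero => rfl
  | succ M ih =>
    show pstep M (pApply M (pstep j f)) = pstep j (pstep M (pApply M f))
    rw [ih, pstep_comm]

lemma pApply_congr {f g : ℤ → ℤ} {c : ℤ} (M : ℕ) (h : ∀ c' ≤ c, f c' = g c') :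
    ∀ c' ≤ c, pApply M f c' = pApply M g c' := by
  induction M with
  | zero => exact h
  | succ M ih =>
    intro c' hc'
    show pstep M (pApply M f) c' = pstep M (pApply M g) c'
    unfold pstep
    rw [ih c' hc', ih (c' - 2*((M:ℤ)+1)) (by omega)]

lemma pApply_sub (M : ℕ) (f g : ℤ → ℤ) (c : ℤ) :
    pApply M (fun c' => f c' - g c') c = pApply M f c - pApply M g c := by
  induction M generalizing c with
  | zero => rfl
  | succ M ih =>
    show pstep M (pApply M fun c' => f c' - g c') c
      = pstep M (pApply M f) c - pstep M (pApply M g) c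
    unfold pstep
    rw [ih, ih]
    ring

lemma pApply_coeff (M : ℕ) (F : LS) (c : ℤ) :
    pApply M (fun c' => F.coeff c') c = (Pfam M * F).coeff c := by
  induction M generalizing c with
  | zero =>
    show F.coeff c = _
    unfold Pfam
    rw [Finset.range_zero, Finset.prod_empty, one_mul]
  | succ M ih =>
    show pstep M (pApply M fun c' => F.coeff c') c = _
    unfold pstep
    rw [ih, ih, Pfam_succ, sub_mul, HahnSeries.coeff_sub, mul_assoc, single_mul_coeff', one_mul]

lemma pApply_low {f : ℤ → ℤ} {s₀ : ℤ} (M : ℕ) (h : ∀ c' < s₀, f c' = 0) :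
    ∀ c' < s₀, pApply M f c' = 0 := by
  induction M with
  | zero => exact h
  | succ M ih =>
    intro c' hc'
    show pstep M (pApply M f) c' = 0
    unfold pstep
    rw [ih c' hc', ih (c' - 2*((M:ℤ)+1)) (by omega), sub_zero]

lemma DIV_one {h : ℤ → ℤ} {s₀ c : ℤ} (i : ℕ) (hlow : ∀ c' < s₀, h c' = 0)
    (hz : ∀ c' ≤ c, pstep i h c' = 0) : ∀ c' ≤ c, h c' = 0 := by
  have step : ∀ (k : ℕ) (c'), c' ≤ c → h c' = h (c' - 2*((i:ℤ)+1)*k) := by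
    intro k
    induction k with
    | zero => intro c' _; norm_num
    | succ k ih =>
      intro c' hc'
      have h1 : h c' = h (c' - 2*((i:ℤ)+1)) := by
        have := hz c' hc'
        unfold pstep at this
        omega
      rw [h1, ih (c' - 2*((i:ℤ)+1)) (by omega)]
      congr 1
      push_cast
      ring
  intro c' hc'
  rw [step ((c' - s₀).toNat + 1) c' hc']
  apply hlow
  have : ((((c' - s₀).toNat + 1 : ℕ)) : ℤ) ≥ c' - s₀ + 1 := by omega
  nlinarith [this, Int.natCast_nonneg ((c' - s₀).toNat + 1)]

lemma DIV {h : ℤ → ℤ} {s₀ c : ℤ} (M : ℕ) (hlow : ∀ c' < s₀, h c' = 0)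
    (hz : ∀ c' ≤ c, pApply M h c' = 0) : ∀ c' ≤ c, h c' = 0 := by
  induction M with
  | zero => exact hz
  | succ M ih =>
    exact ih (DIV_one M (pApply_low M hlow) hz)

/-! ## telescoping: `(q)_N G_N = (q)_M G_M` -/

lemma GA_nat (N : ℕ) (c : ℤ) :
    Gsum (N:ℤ) c = pstep N (fun c' => Gsum ((N:ℤ)+1) c') c := by
  unfold pstep
  exact GA N c

lemma telescope (N K : ℕ) (c : ℤ) :
    pApply N (fun c' => Gsum (N:ℤ) c') c = pApply (N+K) (fun c' => Gsum ((N:ℤ)+(K:ℤ)) c') c := by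
  induction K generalizing c with
  | zero => norm_num
  | succ K ih =>
    have e1 : ∀ c, pApply (N+K) (fun c' => Gsum ((N:ℤ)+(K:ℤ)) c') c
        = pApply (N+K+1) (fun c' => Gsum ((N:ℤ)+(K:ℤ)+1) c') c := by
      intro c
      have e2 : (fun c' => Gsum ((N:ℤ)+(K:ℤ)) c')
          = pstep (N+K) (fun c' => Gsum ((N:ℤ)+(K:ℤ)+1) c') := by
        funext c'
        have := GA_nat (N+K) c'
        push_cast at this
        unfold pstep at this ⊢
        push_cast
        convert this using 3 <;> push_cast <;> ring
      rw [e2, pApply_pstep]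
      rfl
    rw [ih, e1]
    have e3 : (N:ℤ) + (K:ℤ) + 1 = (N:ℤ) + ((K+1:ℕ):ℤ) := by push_cast; ring
    rw [e3]
    rfl

/-- main comparison: `G_N` agrees with `P_M / (q)_N` in low coefficients -/
lemma GD' (N : ℤ) (M : ℕ) (hNM : N ≤ (M:ℤ)) :
    ∀ c ≤ 2*(M:ℤ)+1, Gsum N c = (Pfam M * qPochhammerInv N).coeff c := by
  rcases lt_or_ge N 0 with hN | hN
  · intro c _
    rw [GC hN, pochInv_neg hN, mul_zero, HahnSeries.coeff_zero]
  · intro c hc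
    obtain ⟨N', rfl⟩ : ∃ N' : ℕ, N = (N':ℤ) := ⟨N.toNat, by omega⟩
    set h : ℤ → ℤ := fun c' => Gsum (N':ℤ) c' - (Pfam M * qPochhammerInv (N':ℤ)).coeff c' with hh
    have hlow : ∀ c' < 0, h c' = 0 := by
      intro c' hc'
      have h1 : Gsum (N':ℤ) c' = 0 := by
        unfold Gsum
        rw [tsum_eq_sum (s := ∅)]
        · simp
        intro k _
        rcases lt_or_ge k 0 with hk | hk
        · rw [gtrm_neg hk, HahnSeries.coeff_zero]
        · apply gtrm_van
          have h2 : (0:ℤ) ≤ k*(k+1) + 2*(N':ℤ)*k := by positivity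
          omega
      have h2 : (Pfam M * qPochhammerInv (N':ℤ)).coeff c' = 0 :=
        NN_mul (NN_Pfam M) (NN_inv _) c' hc'
      simp [hh, h1, h2]
    have hz : ∀ c' ≤ c, pApply N' h c' = 0 := by
      intro c' hc'
      rw [hh]
      rw [pApply_sub]
      have t1 : pApply N' (fun c'' => Gsum (N':ℤ) c'') c' = (Pfam M).coeff c' := by
        obtain ⟨K, hK⟩ : ∃ K : ℕ, M = N' + K := ⟨M - N', by omega⟩
        rw [telescope N' K c', ← hK]
        have agree : ∀ c'' ≤ c', Gsum ((N':ℤ)+(K:ℤ)) c'' = (1 : LS).coeff c'' := by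
          intro c'' hc''
          have : (N':ℤ) + (K:ℤ) = ((M:ℕ):ℤ) := by rw [hK]; push_cast; ring
          rw [this]
          exact Gsum_tail M c'' (by omega)
        rw [pApply_congr M agree c' le_rfl, pApply_coeff, mul_one]
      have t2 : pApply N' (fun c'' => (Pfam M * qPochhammerInv (N':ℤ)).coeff c'') c'
          = (Pfam M).coeff c' := by
        rw [pApply_coeff]
        have e : Pfam N' * (Pfam M * qPochhammerInv (N':ℤ)) = Pfam M := by
          calc Pfam N' * (Pfam M * qPochhammerInv (N':ℤ))
              = Pfam M * (Pfam N' * qPochhammerInv (N':ℤ)) := by ring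
            _ = Pfam M := by rw [Pfam_mul_inv, mul_one]
        rw [e]
      rw [t1, t2, sub_self]
    have hfin := DIV N' hlow hz c le_rfl
    simp only [hh] at hfin
    omega

/-! ## the symmetric double sum -/

noncomputable def DD (a b c Bn Bk : ℤ) : ℤ :=
  ∑ n ∈ Finset.Icc (0:ℤ) Bn, ∑ k ∈ Finset.Icc (0:ℤ) Bk, (gtrm a n * gtrm (b+n) k).coeff c

lemma g2_symm (a b n k : ℤ) : gtrm a n * gtrm (b+n) k = gtrm b k * gtrm (a+k) n := by
  unfold gtrm
  rw [sm_mul_sm, sm_mul_sm]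
  rw [show n*(n+1)+2*a*n + (k*(k+1)+2*(b+n)*k)
      = k*(k+1)+2*b*k + (n*(n+1)+2*(a+k)*n) from by ring,
    mul_comm (sgn n) (sgn k), mul_comm (qPochhammerInv n) (qPochhammerInv k)]

lemma DD_symm (a b c Bn : ℤ) : DD a b c Bn Bn = DD b a c Bn Bn := by
  unfold DD
  rw [Finset.sum_comm]
  apply Finset.sum_congr rfl
  intro k _
  apply Finset.sum_congr rfl
  intro n _
  rw [g2_symm]

lemma g2_van {a b c n k : ℤ} (hn : 0 ≤ n) (hk : 0 ≤ k)
    (hc : c < n*(n+1)+2*a*n + (k*(k+1)+2*b*k)) :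
    (gtrm a n * gtrm (b+n) k).coeff c = 0 := by
  unfold gtrm
  rw [sm_mul_sm]
  exact VAN _ (NN_mul (NN_inv n) (NN_inv k)) (by nlinarith [mul_nonneg hn hk])

lemma DD_ext {a b c B0 : ℤ} {Bn Bk Bn' Bk' : ℤ}
    (hvan : ∀ n k : ℤ, 0 ≤ n → 0 ≤ k → (B0 < n ∨ B0 < k) →
      (gtrm a n * gtrm (b+n) k).coeff c = 0)
    (h1 : B0 ≤ Bn) (h2 : B0 ≤ Bk) (h3 : B0 ≤ Bn') (h4 : B0 ≤ Bk') :
    DD a b c Bn Bk = DD a b c Bn' Bk' := by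
  suffices H : ∀ Bn Bk, B0 ≤ Bn → B0 ≤ Bk → DD a b c Bn Bk = DD a b c B0 B0 by
    rw [H _ _ h1 h2, H _ _ h3 h4]
  intro Bn Bk hn hk
  unfold DD
  have inner : ∀ n ∈ Finset.Icc (0:ℤ) Bn,
      (∑ k ∈ Finset.Icc (0:ℤ) Bk, (gtrm a n * gtrm (b+n) k).coeff c)
        = ∑ k ∈ Finset.Icc (0:ℤ) B0, (gtrm a n * gtrm (b+n) k).coeff c := by
    intro n hn'
    rw [Finset.mem_Icc] at hn'
    refine (Finset.sum_subset (Finset.Icc_subset_Icc le_rfl hk) ?_).symm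
    intro k hk1 hk2
    rw [Finset.mem_Icc] at hk1
    rw [Finset.mem_Icc] at hk2
    exact hvan n k hn'.1 hk1.1 (Or.inr (by omega))
  rw [Finset.sum_congr rfl inner]
  refine (Finset.sum_subset (Finset.Icc_subset_Icc le_rfl hn) ?_).symm
  intro n hn1 hn2
  rw [Finset.mem_Icc] at hn1
  rw [Finset.mem_Icc] at hn2
  apply Finset.sum_eq_zero
  intro k hk1
  rw [Finset.mem_Icc] at hk1
  exact hvan n k hn1.1 hk1.1 (Or.inl (by omega))

/-! ## σ step (a): the `P_M`-multiplied index sum equals the double sum -/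

lemma sigma_a (a b c Bn Bk : ℤ) (M : ℕ)
    (hBn : 2*|a| + |c| + 1 ≤ Bn)
    (hBk : ∀ n : ℤ, 0 ≤ n → n ≤ Bn → ∀ c'' : ℤ, -((b+n)*(b+n)) ≤ c'' → c'' ≤ c + a*a →
        2*|b+n| + |c''| + 1 ≤ Bk)
    (hM1 : ∀ n : ℤ, 0 ≤ n → n ≤ Bn → b + n ≤ (M:ℤ))
    (hM2 : c + a*a ≤ 2*(M:ℤ) + 1) :
    ∀ c' ≤ c, (∑' n : ℤ, (Pfam M * trm a b n).coeff c') = DD a b c' Bn Bk := by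
  intro c' hc'
  have hout : ∀ n : ℤ, n ∉ Finset.Icc (0:ℤ) Bn → (Pfam M * trm a b n).coeff c' = 0 := by
    intro n hn
    rw [Finset.mem_Icc] at hn
    rcases lt_or_ge n 0 with h | h
    · rw [trm_neg h, mul_zero, HahnSeries.coeff_zero]
    · have hE : c < n*(n+1) + 2*a*n := Ebound (by omega)
      have e : Pfam M * trm a b n = HahnSeries.single (n*(n+1)+2*a*n) (sgn n) *
          ((qPochhammerInv n * qPochhammerInv (n+b)) * Pfam M) := by
        unfold trm; ring
      rw [e]
      exact VAN _ (NN_mul (NN_mul (NN_inv _) (NN_inv _)) (NN_Pfam M)) (by omega)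
  rw [tsum_eq_sum hout]
  unfold DD
  apply Finset.sum_congr rfl
  intro n hn
  rw [Finset.mem_Icc] at hn
  -- difference of the two `inv n * –` factors vanishes in low degrees
  have hdiff : ∀ c'' ≤ c' - (n*(n+1)+2*a*n),
      ((Pfam M * qPochhammerInv (n+b)) - ∑ k ∈ Finset.Icc (0:ℤ) Bk, gtrm (b+n) k).coeff c'' = 0 := by
    intro c'' hc''
    rw [HahnSeries.coeff_sub, sub_eq_zero]
    have hcc : c'' ≤ c + a*a := by
      have := Elow (a := a) hn.1
      omega
    rcases lt_or_ge c'' (-((b+n)*(b+n))) with hlow | hge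
    · have hz1 : (Pfam M * qPochhammerInv (n+b)).coeff c'' = 0 := by
        apply NN_mul (NN_Pfam M) (NN_inv _)
        nlinarith [sq_nonneg (b+n)]
      have hz2 : (∑ k ∈ Finset.Icc (0:ℤ) Bk, gtrm (b+n) k).coeff c'' = 0 := by
        rw [coeff_sum]
        apply Finset.sum_eq_zero
        intro k hk
        rw [Finset.mem_Icc] at hk
        apply gtrm_van
        have := Elow (a := b+n) hk.1
        omega
      rw [hz1, hz2]
    · have hbox : 2*|b+n| + |c''| + 1 ≤ Bk := hBk n hn.1 hn.2 c'' hge hcc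
      have e1 : (∑ k ∈ Finset.Icc (0:ℤ) Bk, gtrm (b+n) k).coeff c'' = Gsum (b+n) c'' := by
        rw [coeff_sum, Gsum_eq_sum (le_refl _)]
        refine (Finset.sum_subset (Finset.Icc_subset_Icc le_rfl (by omega)) ?_).symm
        intro k hk1 hk2
        exact gtrm_out hk2
      have e2 : Gsum (b+n) c'' = (Pfam M * qPochhammerInv (b+n)).coeff c'' := by
        apply GD' (b+n) M (hM1 n hn.1 hn.2)
        omega
      rw [e1, e2, show b + n = n + b from by ring]
  -- rewrite both sides through `single (En) (sgn n) * (inv n * –)`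
  have eL : Pfam M * trm a b n = HahnSeries.single (n*(n+1)+2*a*n) (sgn n) *
      (qPochhammerInv n * (Pfam M * qPochhammerInv (n+b))) := by
    unfold trm; ring
  have eR : ∀ k : ℤ, gtrm a n * gtrm (b+n) k = HahnSeries.single (n*(n+1)+2*a*n) (sgn n) *
      (qPochhammerInv n * gtrm (b+n) k) := by
    intro k; unfold gtrm; ring
  calc (Pfam M * trm a b n).coeff c'
      = sgn n * (qPochhammerInv n * (Pfam M * qPochhammerInv (n+b))).coeff
          (c' - (n*(n+1)+2*a*n)) := by rw [eL, single_mul_coeff']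
    _ = sgn n * (qPochhammerInv n * (∑ k ∈ Finset.Icc (0:ℤ) Bk, gtrm (b+n) k)).coeff
          (c' - (n*(n+1)+2*a*n)) := by
        congr 1
        have hz : (qPochhammerInv n *
            ((Pfam M * qPochhammerInv (n+b)) - ∑ k ∈ Finset.Icc (0:ℤ) Bk, gtrm (b+n) k)).coeff
            (c' - (n*(n+1)+2*a*n)) = 0 := LOWMUL (NN_inv n) hdiff
        rw [mul_sub, HahnSeries.coeff_sub] at hz
        omega
    _ = ∑ k ∈ Finset.Icc (0:ℤ) Bk, (gtrm a n * gtrm (b+n) k).coeff c' := by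
        rw [_root_.Finset.mul_sum, coeff_sum, _root_.Finset.mul_sum]
        apply Finset.sum_congr rfl
        intro k _
        rw [eR k, single_mul_coeff']

/-! ## σ step (b): stripping the `P_M` factors -/

lemma Ptrm_out (M : ℕ) {a b γ n : ℤ} (hn : n ∉ Finset.Icc (0:ℤ) (2*|a| + |γ| + 1)) :
    (Pfam M * trm a b n).coeff γ = 0 := by
  rw [Finset.mem_Icc] at hn
  rcases lt_or_ge n 0 with h | h
  · rw [trm_neg h, mul_zero, HahnSeries.coeff_zero]
  · have e : Pfam M * trm a b n = HahnSeries.single (n*(n+1)+2*a*n) (sgn n) *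
        ((qPochhammerInv n * qPochhammerInv (n+b)) * Pfam M) := by
      unfold trm; ring
    rw [e]
    exact VAN _ (NN_mul (NN_mul (NN_inv _) (NN_inv _)) (NN_Pfam M)) (Ebound (by omega))

lemma sigma_b (a b : ℤ) (M : ℕ) : ∀ c : ℤ,
    (∑' n : ℤ, (Pfam M * trm a b n).coeff c) = pApply M (fun c' => Isum a b c') c := by
  induction M with
  | zero =>
    intro c
    have e : Pfam 0 = 1 := by
      unfold Pfam; rw [Finset.range_zero, Finset.prod_empty]
    show _ = Isum a b c
    unfold Isum
    congr 1
    funext n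
    rw [e, one_mul]
  | succ M ih =>
    intro c
    have e : ∀ n : ℤ, (Pfam (M+1) * trm a b n).coeff c
        = (Pfam M * trm a b n).coeff c - (Pfam M * trm a b n).coeff (c - 2*((M:ℤ)+1)) := by
      intro n
      rw [Pfam_succ, sub_mul, HahnSeries.coeff_sub, mul_assoc, single_mul_coeff', one_mul]
    have hs1 : Summable (fun n : ℤ => (Pfam M * trm a b n).coeff c) :=
      summable_of_ne_finset_zero (fun n hn => Ptrm_out M hn)
    have hs2 : Summable (fun n : ℤ => (Pfam M * trm a b n).coeff (c - 2*((M:ℤ)+1))) :=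
      summable_of_ne_finset_zero (fun n hn => Ptrm_out M hn)
    calc ∑' n : ℤ, (Pfam (M+1) * trm a b n).coeff c
        = ∑' n : ℤ, ((Pfam M * trm a b n).coeff c
            - (Pfam M * trm a b n).coeff (c - 2*((M:ℤ)+1))) := by
          congr 1; funext n; exact e n
      _ = (∑' n : ℤ, (Pfam M * trm a b n).coeff c)
            - ∑' n : ℤ, (Pfam M * trm a b n).coeff (c - 2*((M:ℤ)+1)) := Summable.tsum_sub hs1 hs2
      _ = pApply (M+1) (fun c' => Isum a b c') c := by
          show _ = pstep M (pApply M fun c' => Isum a b c') c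
          unfold pstep
          rw [ih c, ih (c - 2*((M:ℤ)+1))]

/-! ## the σ-symmetry -/

lemma g2_van'' (x y c c' : ℤ) (hcc : c' ≤ c) {n k : ℤ} (hn : 0 ≤ n) (hk : 0 ≤ k)
    (h : (2*|x| + 2*|y| + |c| + 2*(x*x) + 2*(y*y) + 2 < n)
       ∨ (2*|x| + 2*|y| + |c| + 2*(x*x) + 2*(y*y) + 2 < k)) :
    (gtrm x n * gtrm (y+n) k).coeff c' = 0 := by
  have h1 : -(x*x) ≤ n*(n+1) + 2*x*n := Elow hn
  have h2 : -(y*y) ≤ k*(k+1) + 2*y*k := Elow hk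
  have hc1 := le_abs_self c
  have hc0 := abs_nonneg c
  have hx0 := mul_self_nonneg x
  have hy0 := mul_self_nonneg y
  have hax := abs_nonneg x
  have hay := abs_nonneg y
  apply g2_van hn hk
  rcases lt_or_ge c' (-(x*x) - (y*y)) with hsm | hsm
  · omega
  · rcases h with h | h
    · have habs : |c' + y*y| ≤ |c| + y*y + x*x := by
        rw [abs_le]; omega
      have hb := Ebound (a := x) (c := c' + y*y) (n := n) (by omega)
      omega
    · have habs : |c' + x*x| ≤ |c| + x*x + y*y := by
        rw [abs_le]; omega
      have hb := Ebound (a := y) (c := c' + x*x) (n := k) (by omega)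
      omega

lemma sigma (a b c : ℤ) : Isum a b c = Isum b a c := by
  obtain ⟨B0, hB0⟩ : ∃ B0 : ℤ, B0 = 2*|a| + 2*|b| + |c| + 2*(a*a) + 2*(b*b) + 2 := ⟨_, rfl⟩
  obtain ⟨W, hW⟩ : ∃ W : ℤ, W = |a| + |b| + B0 := ⟨_, rfl⟩
  obtain ⟨Bk, hBkdef⟩ : ∃ Bk : ℤ, Bk = 2*W + W*W + |c| + a*a + b*b + 2 := ⟨_, rfl⟩
  obtain ⟨Mz, hMzdef⟩ : ∃ Mz : ℤ, Mz = W + Bk + 5 := ⟨_, rfl⟩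
  have habsa := abs_nonneg a
  have habsb := abs_nonneg b
  have habsc := abs_nonneg c
  have hsa := mul_self_nonneg a
  have hsb := mul_self_nonneg b
  have hlea := le_abs_self a
  have hleb := le_abs_self b
  have hlec := le_abs_self c
  have hWW := mul_self_nonneg W
  have hMz0 : 0 ≤ Mz := by omega
  have hMcast : ((Mz.toNat : ℕ) : ℤ) = Mz := Int.toNat_of_nonneg hMz0
  have hB0Bk : B0 ≤ Bk := by omega
  have H1 : ∀ c' ≤ c, (∑' n : ℤ, (Pfam Mz.toNat * trm a b n).coeff c') = DD a b c' B0 Bk := by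
    apply sigma_a a b c B0 Bk Mz.toNat
    · omega
    · intro n hn0 hnB c'' hlo hhi
      have h1 : |b + n| ≤ |b| + n := by
        have h1' := abs_add_le b n
        rwa [abs_of_nonneg hn0] at h1'
      have h2 : |b + n| ≤ W := by omega
      have h3 : (b+n)*(b+n) ≤ W*W := by
        calc (b+n)*(b+n) = |b+n| * |b+n| := (abs_mul_abs_self _).symm
          _ ≤ W*W := mul_le_mul h2 h2 (abs_nonneg _) (by omega)
      have h4 : |c''| ≤ W*W + |c| + a*a := by
        rw [abs_le]
        omega
      omega
    · intro n hn0 hnB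
      rw [hMcast]
      omega
    · rw [hMcast]
      omega
  have H2 : ∀ c' ≤ c, (∑' n : ℤ, (Pfam Mz.toNat * trm b a n).coeff c') = DD b a c' B0 Bk := by
    apply sigma_a b a c B0 Bk Mz.toNat
    · omega
    · intro n hn0 hnB c'' hlo hhi
      have h1 : |a + n| ≤ |a| + n := by
        have h1' := abs_add_le a n
        rwa [abs_of_nonneg hn0] at h1'
      have h2 : |a + n| ≤ W := by omega
      have h3 : (a+n)*(a+n) ≤ W*W := by
        calc (a+n)*(a+n) = |a+n| * |a+n| := (abs_mul_abs_self _).symm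
          _ ≤ W*W := mul_le_mul h2 h2 (abs_nonneg _) (by omega)
      have h4 : |c''| ≤ W*W + |c| + b*b := by
        rw [abs_le]
        omega
      omega
    · intro n hn0 hnB
      rw [hMcast]
      omega
    · rw [hMcast]
      omega
  have hva : ∀ c' ≤ c, ∀ n k : ℤ, 0 ≤ n → 0 ≤ k → (B0 < n ∨ B0 < k) →
      (gtrm a n * gtrm (b+n) k).coeff c' = 0 := by
    intro c' hc' n k hn hk hor
    exact g2_van'' a b c c' hc' hn hk (by omega)
  have hvb : ∀ c' ≤ c, ∀ n k : ℤ, 0 ≤ n → 0 ≤ k → (B0 < n ∨ B0 < k) →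
      (gtrm b n * gtrm (a+n) k).coeff c' = 0 := by
    intro c' hc' n k hn hk hor
    exact g2_van'' b a c c' hc' hn hk (by omega)
  have key : ∀ c' ≤ c, pApply Mz.toNat (fun x => Isum a b x - Isum b a x) c' = 0 := by
    intro c' hc'
    have e0 : pApply Mz.toNat (fun x => Isum a b x - Isum b a x) c'
        = pApply Mz.toNat (fun x => Isum a b x) c' - pApply Mz.toNat (fun x => Isum b a x) c' :=
      pApply_sub _ _ _ _
    rw [e0, ← sigma_b a b Mz.toNat c', ← sigma_b b a Mz.toNat c', H1 c' hc', H2 c' hc']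
    have e1 : DD a b c' B0 Bk = DD a b c' Bk Bk :=
      DD_ext (hva c' hc') le_rfl hB0Bk hB0Bk hB0Bk
    have e2 : DD b a c' B0 Bk = DD b a c' Bk Bk :=
      DD_ext (hvb c' hc') le_rfl hB0Bk hB0Bk hB0Bk
    rw [e1, e2, DD_symm, sub_self]
  have hlow : ∀ c' < -(a*a) - (b*b), (fun x => Isum a b x - Isum b a x) c' = 0 := by
    intro c' hc'
    show Isum a b c' - Isum b a c' = 0
    rw [Isum_low (by omega), Isum_low (by omega), sub_self]
  have hfin : Isum a b c - Isum b a c = 0 := DIV Mz.toNat hlow key c le_rfl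
  omega

/-! ## the shear reindexing (termwise) and final assembly -/

lemma trm_shear (a b n : ℤ) :
    trm a b n = HahnSeries.single (b*(b-1) - 2*a*b) (sgn b) * trm (a-b) (-b) (n+b) := by
  unfold trm
  rw [show (n+b) + -b = n from by ring]
  rw [← mul_assoc (HahnSeries.single (b*(b-1) - 2*a*b) (sgn b)), HahnSeries.single_mul_single]
  rw [show b*(b-1) - 2*a*b + ((n+b)*((n+b)+1) + 2*(a-b)*(n+b)) = n*(n+1) + 2*a*n from by ring]
  rw [show sgn b * sgn (n+b) = sgn n from by
    rw [sgn_add, mul_comm (sgn n) (sgn b), ← mul_assoc, sgn_sq, one_mul]]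
  rw [mul_comm (qPochhammerInv (n+b)) (qPochhammerInv n)]

lemma Isum_shear (a b c : ℤ) :
    Isum a b c = sgn b * Isum (a-b) (-b) (c - (b*(b-1) - 2*a*b)) := by
  unfold Isum
  calc ∑' n : ℤ, (trm a b n).coeff c
      = ∑' n : ℤ, sgn b * (trm (a-b) (-b) (n+b)).coeff (c - (b*(b-1) - 2*a*b)) := by
        apply tsum_congr
        intro n
        rw [trm_shear, single_mul_coeff']
    _ = ∑' n : ℤ, sgn b * (trm (a-b) (-b) n).coeff (c - (b*(b-1) - 2*a*b)) := by
        exact (Equiv.addRight b).tsum_eq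
          (fun n => sgn b * (trm (a-b) (-b) n).coeff (c - (b*(b-1) - 2*a*b)))
    _ = sgn b * ∑' n : ℤ, (trm (a-b) (-b) n).coeff (c - (b*(b-1) - 2*a*b)) :=
        tsum_sgn_mul b _

lemma tetra_eq (m e n : ℤ) :
    tetraTerm m e n = HahnSeries.single (-(e*m)) 1 * trm (-m) e n := by
  unfold tetraTerm trm sgn
  rw [mul_assoc, ← mul_assoc (HahnSeries.single (-(e*m)) 1), HahnSeries.single_mul_single,
    one_mul,
    show -(e*m) + (n*(n+1) + 2*(-m)*n) = n*(n+1) - (2*n+e)*m from by ring]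

lemma tetra_eq2 (m e n : ℤ) :
    HahnSeries.single (-e) ((((-1:ℤˣ)^(-e) : ℤˣ) : ℤ)) * tetraTerm e (-e-m) n
      = HahnSeries.single (-e + (e*e + e*m)) (sgn e) * trm (-e) (-e-m) n := by
  have h1 : ((((-1:ℤˣ)^(-e) : ℤˣ)) : ℤ) = sgn e := sgn_neg' e
  rw [h1, tetra_eq e (-e-m) n, ← mul_assoc, HahnSeries.single_mul_single, mul_one,
    show -e + -((-e-m)*e) = -e + (e*e + e*m) from by ring]

/-- the tetrahedron index satisfies the 'triality' symmetry
`I_Δ(m,e)(q) = (−q^{1/2})^{−e} I_Δ(e, −e−m)(q)` as an identity of formal Laurent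
series in `q^{1/2}`, i.e. coefficientwise in every degree `d` (each coefficient of
either side is a sum with only finitely many nonzero terms, and
`(−q^{1/2})^{−e} = (−1)^{−e}·X^{−e}` is the monomial `single (−e) ((−1)^{−e})`). -/
theorem tetrahedron_index_triality (m e : ℤ) (d : ℤ) :
    (∑' n : ℤ, (tetraTerm m e n).coeff d) =
      ∑' n : ℤ,
        (HahnSeries.single (-e) ((((-1 : ℤˣ) ^ (-e) : ℤˣ) : ℤ)) *
          tetraTerm e (-e - m) n).coeff d := by
  calc ∑' n : ℤ, (tetraTerm m e n).coeff d
      = Isum (-m) e (d + e*m) := by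
        apply tsum_congr
        intro n
        rw [tetra_eq, single_mul_coeff', one_mul,
          show d - -(e*m) = d + e*m from by ring]
    _ = sgn e * Isum (-m-e) (-e) (d + e - e*e - e*m) := by
        rw [Isum_shear (-m) e (d + e*m),
          show d + e*m - (e*(e-1) - 2*(-m)*e) = d + e - e*e - e*m from by ring]
    _ = sgn e * Isum (-e) (-e-m) (d + e - e*e - e*m) := by
        rw [sigma, show (-m-e : ℤ) = -e-m from by ring]
    _ = ∑' n : ℤ, sgn e * (trm (-e) (-e-m) n).coeff (d + e - e*e - e*m) :=
        (tsum_sgn_mul e _).symm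
    _ = ∑' n : ℤ, (HahnSeries.single (-e) ((((-1 : ℤˣ) ^ (-e) : ℤˣ) : ℤ)) *
          tetraTerm e (-e - m) n).coeff d := by
        apply tsum_congr
        intro n
        rw [tetra_eq2, single_mul_coeff',
          show d - (-e + (e*e + e*m)) = d + e - e*e - e*m from by ring]
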